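/- arXiv:2505.04234 — 2 statements merged into one kernel-verified Lean document; each statement's English description precedes it below -/
import Mathlib

section
/- Let ψ₁, ψ₂ be unit vectors in a complex inner product space, let |y₁⟩, |y₂⟩ be orthonormal vectors, and suppose |⟨ψ₁, y₁⟩|² ≥ 1 − ε and |⟨ψ₂, y₂⟩|² ≥ 1 − ε with ε < 1/2. Then |⟨ψ₁, ψ₂⟩| ≤ 2√(ε(1−ε)) + ε ≤ 2√ε + ε. -/
private lemma stmt_4_arith (ε : ℝ) (h0 : 0 ≤ ε) (hε : ε < 1 / 2) :
    2 * Real.sqrt ε ≤ 2 * Real.sqrt (ε * (1 - ε)) + ε ∧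
    2 * Real.sqrt (ε * (1 - ε)) + ε ≤ 2 * Real.sqrt ε + ε := by
  have hprod : 0 ≤ ε * (1 - ε) := by nlinarith
  set s := Real.sqrt ε with hsdef
  set t := Real.sqrt (ε * (1 - ε)) with htdef
  have hs : s ^ 2 = ε := Real.sq_sqrt h0
  have ht : t ^ 2 = ε * (1 - ε) := Real.sq_sqrt hprod
  have hsn : 0 ≤ s := Real.sqrt_nonneg _
  have htn : 0 ≤ t := Real.sqrt_nonneg _
  have hs1 : s ≤ 1 := by nlinarith
  have ht1 : t ≤ 1 := by nlinarith
  have hse : ε ≤ s := by nlinarith [mul_nonneg hsn (sub_nonneg.2 hs1)]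
  have hte : ε ≤ t := by nlinarith [mul_nonneg htn (sub_nonneg.2 ht1)]
  have hst : (s - t) * (s + t) = ε ^ 2 := by nlinarith
  constructor
  · nlinarith [mul_nonneg (sub_nonneg.2 hse) (sub_nonneg.2 hte)]
  · have : t ≤ s := by
      have : ε * (1 - ε) ≤ ε := by nlinarith
      exact Real.sqrt_le_sqrt this
    linarith

/-- feature states with high overlap with orthonormal label vectors
are nearly orthogonal. -/
theorem stmt_4 {E : Type*} [NormedAddCommGroup E] [InnerProductSpace ℂ E]
    (ψ₁ ψ₂ y₁ y₂ : E) (hψ₁ : ‖ψ₁‖ = 1) (hψ₂ : ‖ψ₂‖ = 1)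
    (hy₁ : ‖y₁‖ = 1) (hy₂ : ‖y₂‖ = 1) (hortho : (inner ℂ y₁ y₂ : ℂ) = 0)
    (ε : ℝ) (hε : ε < 1 / 2)
    (h₁ : 1 - ε ≤ ‖(inner ℂ ψ₁ y₁ : ℂ)‖ ^ 2)
    (h₂ : 1 - ε ≤ ‖(inner ℂ ψ₂ y₂ : ℂ)‖ ^ 2) :
    ‖(inner ℂ ψ₁ ψ₂ : ℂ)‖ ≤ 2 * Real.sqrt (ε * (1 - ε)) + ε ∧
    2 * Real.sqrt (ε * (1 - ε)) + ε ≤ 2 * Real.sqrt ε + ε := by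
  have hcs1 : ‖(inner ℂ ψ₁ y₁ : ℂ)‖ ≤ 1 := by
    have := norm_inner_le_norm (𝕜 := ℂ) ψ₁ y₁
    rwa [hψ₁, hy₁, one_mul] at this
  have hε0 : 0 ≤ ε := by nlinarith [norm_nonneg (inner ℂ ψ₁ y₁ : ℂ)]
  have hon : Orthonormal ℂ (![y₁, y₂]) := by
    rw [orthonormal_iff_ite]
    intro i j
    have h21 : (inner ℂ y₂ y₁ : ℂ) = 0 := by
      rw [← inner_conj_symm, hortho, map_zero]
    fin_cases i <;> fin_cases j <;>
      simp_all [inner_self_eq_norm_sq_to_K]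
  have hbessel : ‖(inner ℂ y₁ ψ₂ : ℂ)‖ ^ 2 + ‖(inner ℂ y₂ ψ₂ : ℂ)‖ ^ 2 ≤ 1 := by
    have := hon.sum_inner_products_le (x := ψ₂) (s := Finset.univ)
    simpa [Fin.sum_univ_two, hψ₂] using this
  have hy2ψ2 : ‖(inner ℂ y₂ ψ₂ : ℂ)‖ = ‖(inner ℂ ψ₂ y₂ : ℂ)‖ := norm_inner_symm _ _
  have h2' : ‖(inner ℂ y₁ ψ₂ : ℂ)‖ ^ 2 ≤ ε := by
    have h₂' : 1 - ε ≤ ‖(inner ℂ y₂ ψ₂ : ℂ)‖ ^ 2 := by rw [hy2ψ2]; exact h₂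
    linarith
  have hy1ψ2 : ‖(inner ℂ y₁ ψ₂ : ℂ)‖ ≤ Real.sqrt ε :=
    calc ‖(inner ℂ y₁ ψ₂ : ℂ)‖ = Real.sqrt (‖(inner ℂ y₁ ψ₂ : ℂ)‖ ^ 2) :=
          (Real.sqrt_sq (norm_nonneg _)).symm
      _ ≤ Real.sqrt ε := Real.sqrt_le_sqrt h2'
  set c : ℂ := inner ℂ y₁ ψ₁ with hc
  have hcnorm : ‖c‖ = ‖(inner ℂ ψ₁ y₁ : ℂ)‖ := norm_inner_symm _ _
  have hconj : (inner ℂ ψ₁ y₁ : ℂ) = starRingEnd ℂ c := by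
    rw [hc, inner_conj_symm]
  have hval : (inner ℂ ψ₁ (c • y₁) : ℂ) = (‖c‖ : ℂ) ^ 2 := by
    rw [inner_smul_right, hconj, RCLike.mul_conj]
    norm_cast
  have hproj : ‖ψ₁ - c • y₁‖ ^ 2 = 1 - ‖c‖ ^ 2 := by
    have expand := @norm_sub_sq ℂ E _ _ _ ψ₁ (c • y₁)
    rw [hval, norm_smul, hy₁, hψ₁] at expand
    rw [expand]
    have : RCLike.re ((‖c‖ : ℂ) ^ 2) = ‖c‖ ^ 2 := by norm_cast
    rw [this]
    simp
    ring
  have hprojsq : ‖ψ₁ - c • y₁‖ ^ 2 ≤ ε := by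
    rw [hproj, hcnorm]; linarith
  have hproj_le : ‖ψ₁ - c • y₁‖ ≤ Real.sqrt ε :=
    calc ‖ψ₁ - c • y₁‖ = Real.sqrt (‖ψ₁ - c • y₁‖ ^ 2) :=
          (Real.sqrt_sq (norm_nonneg _)).symm
      _ ≤ Real.sqrt ε := Real.sqrt_le_sqrt hprojsq
  have hdecomp : (inner ℂ ψ₁ ψ₂ : ℂ) =
      inner ℂ (ψ₁ - c • y₁) ψ₂ + (starRingEnd ℂ c) * inner ℂ y₁ ψ₂ := by
    rw [inner_sub_left, inner_smul_left]; ring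
  have t1 : ‖(inner ℂ (ψ₁ - c • y₁) ψ₂ : ℂ)‖ ≤ Real.sqrt ε :=
    calc ‖(inner ℂ (ψ₁ - c • y₁) ψ₂ : ℂ)‖ ≤ ‖ψ₁ - c • y₁‖ * ‖ψ₂‖ :=
          norm_inner_le_norm _ _
      _ = ‖ψ₁ - c • y₁‖ := by rw [hψ₂, mul_one]
      _ ≤ Real.sqrt ε := hproj_le
  have t2 : ‖(starRingEnd ℂ c) * (inner ℂ y₁ ψ₂ : ℂ)‖ ≤ Real.sqrt ε := by
    rw [norm_mul, RCLike.norm_conj]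
    calc ‖c‖ * ‖(inner ℂ y₁ ψ₂ : ℂ)‖ ≤ 1 * Real.sqrt ε := by
          apply mul_le_mul (hcnorm ▸ hcs1) hy1ψ2 (norm_nonneg _) zero_le_one
      _ = Real.sqrt ε := one_mul _
  have hkey : ‖(inner ℂ ψ₁ ψ₂ : ℂ)‖ ≤ 2 * Real.sqrt ε := by
    rw [hdecomp]
    have := norm_add_le (inner ℂ (ψ₁ - c • y₁) ψ₂ : ℂ) ((starRingEnd ℂ c) * inner ℂ y₁ ψ₂)
    linarith
  obtain ⟨a1, a2⟩ := stmt_4_arith ε hε0 hε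
  exact ⟨hkey.trans a1, a2⟩
end

section
/- Let K be a symmetric positive definite M×M real matrix with smallest eigenvalue λ_min > 0, and let K' be symmetric positive definite with ‖K' − K‖_F ≤ ε' < λ_min. Let x₀ minimize ½xᵀKx − cᵀx over the feasible set {x : Gx ≥ g, Dx = d}, and x₀' the minimizer with K replaced by K'. Then ‖x₀' − x₀‖₂ ≤ ε'/(λ_min − ε') · (1 + ‖x₀‖₂). -/
open scoped BigOperators

private lemma stmt8_aux (lam e n x : ℝ) (he : 0 ≤ e) (hn : 0 < n) (hx : 0 ≤ x)
    (h : lam * n ^ 2 ≤ e * (n * n) + e * (n * x)) : n * (lam - e) ≤ e * (1 + x) := by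
  have h1 : (lam - e) * n ≤ e * x := by
    by_contra h3
    push_neg at h3
    nlinarith [mul_pos hn (by linarith : (0:ℝ) < (lam - e) * n - e * x)]
  nlinarith

/-- Daniel's perturbation lemma for quadratic programs: if K is
symmetric positive definite with smallest eigenvalue λmin > 0 and K' is a
symmetric positive definite perturbation with ‖K'−K‖_F ≤ ε' < λmin, then the
minimizers over a fixed nonempty polyhedron satisfy
‖x₀'−x₀‖₂ ≤ ε'/(λmin−ε')·(1+‖x₀‖₂). -/
theorem stmt_8 (M N₁ N₂ : ℕ)
    (K K' : Matrix (Fin M) (Fin M) ℝ) (c : Fin M → ℝ)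
    (G : Matrix (Fin N₁) (Fin M) ℝ) (g : Fin N₁ → ℝ)
    (D : Matrix (Fin N₂) (Fin M) ℝ) (d : Fin N₂ → ℝ)
    (hK : K.PosDef) (hK' : K'.PosDef)
    (lammin : ℝ) (hlampos : 0 < lammin)
    (hlam : ∀ v : Fin M → ℝ, lammin * ∑ i, v i ^ 2 ≤ dotProduct v (Matrix.mulVec K v))
    (hlammin : ∃ v : Fin M → ℝ, v ≠ 0 ∧
      dotProduct v (Matrix.mulVec K v) = lammin * ∑ i, v i ^ 2)
    (ε' : ℝ) (hε' : Real.sqrt (∑ i, ∑ j, (K' i j - K i j) ^ 2) ≤ ε') (hε'lt : ε' < lammin)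
    (S : Set (Fin M → ℝ))
    (hS : S = {x | (∀ i, g i ≤ Matrix.mulVec G x i) ∧ Matrix.mulVec D x = d})
    (x₀ x₀' : Fin M → ℝ)
    (hx₀ : x₀ ∈ S ∧ ∀ x ∈ S,
      (1 / 2) * dotProduct x₀ (Matrix.mulVec K x₀) - dotProduct c x₀ ≤
      (1 / 2) * dotProduct x (Matrix.mulVec K x) - dotProduct c x)
    (hx₀' : x₀' ∈ S ∧ ∀ x ∈ S,
      (1 / 2) * dotProduct x₀' (Matrix.mulVec K' x₀') - dotProduct c x₀' ≤
      (1 / 2) * dotProduct x (Matrix.mulVec K' x) - dotProduct c x) :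
    Real.sqrt (∑ i, (x₀' i - x₀ i) ^ 2) ≤
      ε' / (lammin - ε') * (1 + Real.sqrt (∑ i, x₀ i ^ 2)) := by
  classical
  -- Cauchy–Schwarz for the Frobenius norm
  have cs : ∀ (E : Matrix (Fin M) (Fin M) ℝ) (v w : Fin M → ℝ),
      |dotProduct v (E.mulVec w)| ≤
        Real.sqrt (∑ i, ∑ j, E i j ^ 2) *
          (Real.sqrt (∑ i, v i ^ 2) * Real.sqrt (∑ i, w i ^ 2)) := by
    intro E v w
    have h1 : dotProduct v (E.mulVec w)
        = ∑ p : Fin M × Fin M, E p.1 p.2 * (v p.1 * w p.2) := by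
      rw [Fintype.sum_prod_type]
      simp only [dotProduct, Matrix.mulVec, Finset.mul_sum]
      refine Finset.sum_congr rfl fun i _ => Finset.sum_congr rfl fun j _ => by ring
    have h2 := Finset.sum_mul_sq_le_sq_mul_sq Finset.univ
      (fun p : Fin M × Fin M => E p.1 p.2) (fun p : Fin M × Fin M => v p.1 * w p.2)
    have h3 : (∑ p : Fin M × Fin M, E p.1 p.2 ^ 2) = ∑ i, ∑ j, E i j ^ 2 := by
      rw [Fintype.sum_prod_type]
    have h4 : (∑ p : Fin M × Fin M, (v p.1 * w p.2) ^ 2)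
        = (∑ i, v i ^ 2) * (∑ i, w i ^ 2) := by
      rw [Fintype.sum_prod_type, Finset.sum_mul_sum]
      exact Finset.sum_congr rfl fun i _ => Finset.sum_congr rfl fun j _ => by ring
    have hnnE : (0:ℝ) ≤ ∑ i, ∑ j, E i j ^ 2 := by positivity
    have hnnv : (0:ℝ) ≤ ∑ i, v i ^ 2 := by positivity
    have hnnw : (0:ℝ) ≤ ∑ i, w i ^ 2 := by positivity
    calc |dotProduct v (E.mulVec w)|
        = Real.sqrt ((dotProduct v (E.mulVec w)) ^ 2) := (Real.sqrt_sq_eq_abs _).symm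
      _ ≤ Real.sqrt ((∑ i, ∑ j, E i j ^ 2) * ((∑ i, v i ^ 2) * (∑ i, w i ^ 2))) := by
          apply Real.sqrt_le_sqrt
          rw [h1]
          calc (∑ p : Fin M × Fin M, E p.1 p.2 * (v p.1 * w p.2)) ^ 2
              ≤ (∑ p : Fin M × Fin M, E p.1 p.2 ^ 2)
                  * (∑ p : Fin M × Fin M, (v p.1 * w p.2) ^ 2) := h2
            _ = (∑ i, ∑ j, E i j ^ 2) * ((∑ i, v i ^ 2) * (∑ i, w i ^ 2)) := by
                rw [h3, h4]
      _ = Real.sqrt (∑ i, ∑ j, E i j ^ 2) *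
            (Real.sqrt (∑ i, v i ^ 2) * Real.sqrt (∑ i, w i ^ 2)) := by
          rw [Real.sqrt_mul hnnE, Real.sqrt_mul hnnv]
  -- symmetry of a hermitian real matrix
  have symm_of : ∀ (A : Matrix (Fin M) (Fin M) ℝ), A.IsHermitian → ∀ i j, A i j = A j i := by
    intro A hA i j
    exact (hA.apply i j).symm
  -- symmetry of the bilinear form
  have bsymm : ∀ (A : Matrix (Fin M) (Fin M) ℝ), (∀ i j, A i j = A j i) →
      ∀ v w : Fin M → ℝ, dotProduct v (A.mulVec w) = dotProduct w (A.mulVec v) := by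
    intro A hA v w
    simp only [dotProduct, Matrix.mulVec, Finset.mul_sum]
    rw [Finset.sum_comm]
    refine Finset.sum_congr rfl fun j _ => Finset.sum_congr rfl fun i _ => by
      rw [hA j i]; ring
  -- convexity of S
  have hmem : ∀ t : ℝ, 0 ≤ t → t ≤ 1 → ∀ y z : Fin M → ℝ, y ∈ S → z ∈ S →
      y + t • (z - y) ∈ S := by
    intro t ht0 ht1 y z hy hz
    rw [hS] at hy hz ⊢
    obtain ⟨hy1, hy2⟩ := hy
    obtain ⟨hz1, hz2⟩ := hz
    constructor
    · intro i
      have hGi : Matrix.mulVec G (y + t • (z - y)) i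
          = Matrix.mulVec G y i + t * (Matrix.mulVec G z i - Matrix.mulVec G y i) := by
        rw [Matrix.mulVec_add, Matrix.mulVec_smul, Matrix.mulVec_sub]
        simp [smul_eq_mul]
      rw [hGi]
      nlinarith [hy1 i, hz1 i]
    · rw [Matrix.mulVec_add, Matrix.mulVec_smul, Matrix.mulVec_sub, hy2, hz2]
      simp
  -- first-order optimality in a feasible direction
  have key : ∀ (A : Matrix (Fin M) (Fin M) ℝ), (∀ i j, A i j = A j i) →
      (∀ v : Fin M → ℝ, 0 ≤ dotProduct v (A.mulVec v)) →
      ∀ p q : Fin M → ℝ, p ∈ S → q ∈ S →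
      (∀ x ∈ S, (1 / 2) * dotProduct p (Matrix.mulVec A p) - dotProduct c p ≤
        (1 / 2) * dotProduct x (Matrix.mulVec A x) - dotProduct c x) →
      0 ≤ dotProduct (q - p) (A.mulVec p) - dotProduct c (q - p) := by
    intro A hA hAnn p q hp hq hmin
    set w : Fin M → ℝ := q - p with hw
    have hexp : ∀ t : ℝ, dotProduct (p + t • w) (A.mulVec (p + t • w))
        = dotProduct p (A.mulVec p) + 2 * t * dotProduct w (A.mulVec p)
          + t ^ 2 * dotProduct w (A.mulVec w) := by
      intro t
      rw [Matrix.mulVec_add, Matrix.mulVec_smul, add_dotProduct,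
        smul_dotProduct, dotProduct_add, dotProduct_add,
        dotProduct_smul, dotProduct_smul, bsymm A hA p w]
      simp only [smul_eq_mul]
      ring
    have hstep : ∀ t : ℝ, 0 < t → t ≤ 1 →
        0 ≤ dotProduct w (A.mulVec p) - dotProduct c w
            + (t / 2) * dotProduct w (A.mulVec w) := by
      intro t ht0 ht1
      have hmem' : p + t • w ∈ S := hmem t ht0.le ht1 p q hp hq
      have hle := hmin _ hmem'
      rw [hexp t] at hle
      have hc : dotProduct c (p + t • w)
          = dotProduct c p + t * dotProduct c w := by
        rw [dotProduct_add, dotProduct_smul]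
        simp [smul_eq_mul]
      rw [hc] at hle
      have h2 : 0 ≤ t * (dotProduct w (A.mulVec p) - dotProduct c w
          + (t / 2) * dotProduct w (A.mulVec w)) := by nlinarith [hle]
      exact nonneg_of_mul_nonneg_right h2 ht0
    by_contra hneg
    push_neg at hneg
    set a : ℝ := dotProduct w (A.mulVec p) - dotProduct c w with ha
    set b : ℝ := dotProduct w (A.mulVec w) with hb
    have hbnn : 0 ≤ b := hAnn w
    have hbpos : 0 < b + 1 := by linarith
    have htpos : 0 < min 1 (-a / (b + 1)) := by
      exact lt_min one_pos (div_pos (by linarith) hbpos)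
    have ht1 : min 1 (-a / (b + 1)) ≤ 1 := min_le_left _ _
    have hstep' := hstep _ htpos ht1
    have hdiv : min 1 (-a / (b + 1)) * (b + 1) ≤ -a :=
      (le_div_iff₀ hbpos).mp (min_le_right _ _)
    nlinarith [hstep', hdiv, hbnn, htpos, mul_nonneg htpos.le hbnn]
  -- apply to both quadratic programs
  set u : Fin M → ℝ := x₀' - x₀ with hu
  have hKnn : ∀ v : Fin M → ℝ, 0 ≤ dotProduct v (Matrix.mulVec K v) := by
    intro v
    refine le_trans ?_ (hlam v)
    positivity
  have hK'nn : ∀ v : Fin M → ℝ, 0 ≤ dotProduct v (Matrix.mulVec K' v) := by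
    intro v
    by_cases hv : v = 0
    · simp [hv]
    · exact (hK'.dotProduct_mulVec_pos hv).le
  have A1 : 0 ≤ dotProduct u (K.mulVec x₀) - dotProduct c u :=
    key K (symm_of K hK.1) hKnn x₀ x₀' hx₀.1 hx₀'.1 hx₀.2
  have A2 : 0 ≤ dotProduct (x₀ - x₀') (K'.mulVec x₀') - dotProduct c (x₀ - x₀') :=
    key K' (symm_of K' hK'.1) hK'nn x₀' x₀ hx₀'.1 hx₀.1 hx₀'.2
  have hxx : x₀ - x₀' = -u := by
    rw [hu]; abel
  rw [hxx, neg_dotProduct, dotProduct_neg] at A2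
  -- so  u ⬝ K' x₀' ≤ c ⬝ u ≤ u ⬝ K x₀
  have hmain : dotProduct u (K'.mulVec x₀') ≤ dotProduct u (K.mulVec x₀) := by
    linarith
  have hx0' : x₀' = x₀ + u := by
    rw [hu]; abel
  have hsplit : dotProduct u (K'.mulVec x₀')
      = dotProduct u (K.mulVec u) + dotProduct u ((K' - K).mulVec u)
        + dotProduct u ((K' - K).mulVec x₀) + dotProduct u (K.mulVec x₀) := by
    rw [hx0', Matrix.mulVec_add, dotProduct_add, Matrix.sub_mulVec, Matrix.sub_mulVec,
      dotProduct_sub, dotProduct_sub]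
    ring
  have hquad : dotProduct u (K.mulVec u)
      ≤ - dotProduct u ((K' - K).mulVec u) - dotProduct u ((K' - K).mulVec x₀) := by
    rw [hsplit] at hmain
    linarith
  -- norms
  set nu : ℝ := Real.sqrt (∑ i, u i ^ 2) with hnu
  set nx : ℝ := Real.sqrt (∑ i, x₀ i ^ 2) with hnx
  have hnunn : 0 ≤ nu := Real.sqrt_nonneg _
  have hnxnn : 0 ≤ nx := Real.sqrt_nonneg _
  have hnusq : nu ^ 2 = ∑ i, u i ^ 2 := Real.sq_sqrt (by positivity)
  have hEsum : (∑ i, ∑ j, (K' - K) i j ^ 2) = ∑ i, ∑ j, (K' i j - K i j) ^ 2 := by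
    simp [Matrix.sub_apply]
  have hEnn : Real.sqrt (∑ i, ∑ j, (K' - K) i j ^ 2) ≤ ε' := by
    rw [hEsum]; exact hε'
  have hε'nn : 0 ≤ ε' := le_trans (Real.sqrt_nonneg _) hEnn
  have cs1 : |dotProduct u ((K' - K).mulVec u)| ≤ ε' * (nu * nu) := by
    refine le_trans (cs (K' - K) u u) ?_
    have h0 : (0:ℝ) ≤ nu * nu := mul_nonneg hnunn hnunn
    exact mul_le_mul_of_nonneg_right hEnn h0
  have cs2 : |dotProduct u ((K' - K).mulVec x₀)| ≤ ε' * (nu * nx) := by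
    refine le_trans (cs (K' - K) u x₀) ?_
    have h0 : (0:ℝ) ≤ nu * nx := mul_nonneg hnunn hnxnn
    exact mul_le_mul_of_nonneg_right hEnn h0
  have hlow : lammin * nu ^ 2 ≤ dotProduct u (K.mulVec u) := by
    rw [hnusq]; exact hlam u
  have hfinal : lammin * nu ^ 2 ≤ ε' * (nu * nu) + ε' * (nu * nx) := by
    have h1 := abs_le.mp cs1
    have h2 := abs_le.mp cs2
    nlinarith [hquad, hlow, h1.1, h2.1]
  -- conclude
  have hgoal_eq : Real.sqrt (∑ i, (x₀' i - x₀ i) ^ 2) = nu := by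
    rw [hnu, hu]
    simp [Pi.sub_apply]
  rw [hgoal_eq, div_mul_eq_mul_div, le_div_iff₀ (by linarith)]
  rcases eq_or_lt_of_le hnunn with h0 | h0
  · rw [← h0]
    have : 0 ≤ ε' * (1 + nx) := by nlinarith
    linarith
  · exact stmt8_aux lammin ε' nu nx hε'nn h0 hnxnn hfinal
end
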